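/- Let A be a finite-dimensional algebra, M a generator-cogenerator, Λ = End_A(M), and X an A-module admitting a minimal add M-approximating sequence 0 → M₁ → M₀ → X → 0. Then the Λ-module Hom_A(M, X) has projective dimension at most 2 over Λ. -/

import Mathlib

open CategoryTheory

universe u

section Defs
variable (A : Type u) [Ring A]

/-- `N` lies in `add M`: it is a direct summand of a finite direct sum of copies of `M`. -/
def MemAdd (M N : ModuleCat.{u} A) : Prop :=
  ∃ (n : ℕ) (i : N ⟶ ModuleCat.of A (Fin n → M)) (p : ModuleCat.of A (Fin n → M) ⟶ N),
    i ≫ p = 𝟙 N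

/-- `0 → M₁ →f M₀ →g X → 0` is a short exact sequence of `A`-modules. -/
def IsSES {M₁ M₀ X : ModuleCat.{u} A} (f : M₁ ⟶ M₀) (g : M₀ ⟶ X) : Prop :=
  Function.Injective f ∧ Function.Surjective g ∧ LinearMap.range f.hom = LinearMap.ker g.hom

/-- `g : M₀ → X` is a right `add M`-approximation of `X`. -/
def IsRightApprox (M : ModuleCat.{u} A) {M₀ X : ModuleCat.{u} A} (g : M₀ ⟶ X) : Prop :=
  MemAdd A M M₀ ∧ ∀ (N : ModuleCat.{u} A) (f : N ⟶ X), MemAdd A M N → ∃ q : N ⟶ M₀, q ≫ g = f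

/-- `g` is right minimal. -/
def IsRightMinimal {M₀ X : ModuleCat.{u} A} (g : M₀ ⟶ X) : Prop :=
  ∀ h : M₀ ⟶ M₀, h ≫ g = g → IsIso h

/-- `0 → M₁ → M₀ → X → 0` is an `add M`-approximating sequence for `X`. -/
def IsApproxSeq (M : ModuleCat.{u} A) {M₁ M₀ X : ModuleCat.{u} A}
    (f : M₁ ⟶ M₀) (g : M₀ ⟶ X) : Prop :=
  MemAdd A M M₁ ∧ IsSES A f g ∧ IsRightApprox A M g

/-- minimal `add M`-approximating sequence. -/
def IsMinApproxSeq (M : ModuleCat.{u} A) {M₁ M₀ X : ModuleCat.{u} A}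
    (f : M₁ ⟶ M₀) (g : M₀ ⟶ X) : Prop :=
  IsApproxSeq A M f g ∧ IsRightMinimal A g

def HasApproxSeq (M X : ModuleCat.{u} A) : Prop :=
  ∃ (M₁ M₀ : ModuleCat.{u} A) (f : M₁ ⟶ M₀) (g : M₀ ⟶ X), IsApproxSeq A M f g

/-- projective dimension at most `n`. -/
def PdLE : ℕ → ModuleCat.{u} A → Prop
  | 0, X => Projective X
  | n+1, X => Projective X ∨ ∃ (K P : ModuleCat.{u} A) (f : K ⟶ P) (g : P ⟶ X),
      Projective P ∧ IsSES A f g ∧ PdLE n K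

/-- global dimension at most `n` (on finitely generated modules). -/
def GlobalDimLE (n : ℕ) : Prop := ∀ X : ModuleCat.{u} A, Module.Finite A X → PdLE A n X

/-- `M` is a generator-cogenerator of `mod A`. -/
def IsGenCogen (M : ModuleCat.{u} A) : Prop :=
  MemAdd A M (ModuleCat.of A A) ∧
    ∀ N : ModuleCat.{u} A, Module.Finite A N → Injective N → MemAdd A M N

/-- representation dimension at most `n`. -/
def RepDimLE (n : ℕ) : Prop :=
  ∃ M : ModuleCat.{u} A, Module.Finite A M ∧ IsGenCogen A M ∧
    GlobalDimLE (Module.End A M) n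

/-- representation dimension equal to `n`. -/
def RepDimEq (n : ℕ) : Prop := RepDimLE A n ∧ ∀ m : ℕ, m < n → ¬ RepDimLE A m

/-- indecomposable module -/
def Indec (X : ModuleCat.{u} A) : Prop :=
  (∃ x : X, x ≠ 0) ∧ ∀ e : X ⟶ X, e ≫ e = e → e = 0 ∨ e = 𝟙 X

/-- representation-finite -/
def RepFinite : Prop :=
  ∃ (n : ℕ) (f : Fin n → ModuleCat.{u} A),
    ∀ X : ModuleCat.{u} A, Module.Finite A X → Indec A X → ∃ i, Nonempty (X ≅ f i)
end Defs


section HomEnd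
variable (A : Type u) [Ring A] (M : ModuleCat.{u} A)

/-- `Hom_A(M, X)` as a module over `Λ = End_A(M)ᵒᵖ`, acting by precomposition. -/
noncomputable instance homEndModule (X : ModuleCat.{u} A) :
    Module (Module.End A M)ᵐᵒᵖ (M →ₗ[A] X) where
  smul e f := f ∘ₗ e.unop
  one_smul f := by ext x; rfl
  mul_smul e₁ e₂ f := by ext x; rfl
  smul_zero e := rfl
  smul_add e f g := rfl
  add_smul e₁ e₂ f := by ext x; change f (e₁.unop x + e₂.unop x) = _; rw [map_add]; rfl
  zero_smul f := by ext x; change f 0 = 0; rw [map_zero]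

/-- The `Λ`-linear map `Hom_A(M, X) → Hom_A(M, Y)` induced by `g : X → Y`. -/
noncomputable def homPush {X Y : ModuleCat.{u} A} (g : X ⟶ Y) :
    (M →ₗ[A] X) →ₗ[(Module.End A M)ᵐᵒᵖ] (M →ₗ[A] Y) where
  toFun f := (g.hom : X →ₗ[A] Y) ∘ₗ f
  map_add' f₁ f₂ := by ext x; simp
  map_smul' e f := rfl

end HomEnd

section Aux

variable (A : Type u) [Ring A] (M : ModuleCat.{u} A)

noncomputable instance homEndModuleOf (n : ℕ) :
    Module (Module.End A M)ᵐᵒᵖ (M →ₗ[A] ↑(ModuleCat.of A (Fin n → ↑M))) :=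
  homEndModule A M (ModuleCat.of A (Fin n → ↑M))

/-- `Hom_A(M, M^n)` is `Λ`-linearly isomorphic to `Λ^n`. -/
noncomputable def homPiEquiv (n : ℕ) :
    (M →ₗ[A] ↑(ModuleCat.of A (Fin n → ↑M))) ≃ₗ[(Module.End A M)ᵐᵒᵖ]
      (Fin n → (Module.End A M)ᵐᵒᵖ) where
  toFun f j := MulOpposite.op ((LinearMap.proj j : (Fin n → ↑M) →ₗ[A] ↑M) ∘ₗ f)
  map_add' f₁ f₂ := by ext j; simp [LinearMap.comp_add]
  map_smul' e f := rfl
  invFun g := LinearMap.pi (fun j => (g j).unop)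
  left_inv f := by ext x j; rfl
  right_inv g := by ext j x; rfl

theorem projective_hom (N : ModuleCat.{u} A) (hN : MemAdd A M N) :
    Projective (ModuleCat.of (Module.End A M)ᵐᵒᵖ (M →ₗ[A] N)) := by
  obtain ⟨n, i, p, hip⟩ := hN
  rw [← IsProjective.iff_projective]
  haveI : Module.Projective (Module.End A M)ᵐᵒᵖ
      (M →ₗ[A] ↑(ModuleCat.of A (Fin n → ↑M))) :=
    Module.Projective.of_equiv (homPiEquiv A M n).symm
  refine Module.Projective.of_split (homPush A M i) (homPush A M p) ?_
  ext φ x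
  exact LinearMap.congr_fun (congrArg ModuleCat.Hom.hom hip) (φ x)

theorem memAdd_self : MemAdd A M M := by
  refine ⟨1, ModuleCat.ofHom (LinearMap.pi (fun _ => LinearMap.id)), ModuleCat.ofHom (LinearMap.proj 0), ?_⟩
  ext x
  rfl

end Aux

/-- If `M` is a generator-cogenerator and `X` admits a minimal
`add M`-approximating sequence, then the `End_A(M)ᵒᵖ`-module `Hom_A(M, X)` has projective
dimension at most `2`. -/
theorem stmt13 {k : Type u} [Field k] (A : Type u) [Ring A] [Algebra k A]
    [FiniteDimensional k A] (M : ModuleCat.{u} A) [Module.Finite A M]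
    (hM : IsGenCogen A M)
    {M₁ M₀ X : ModuleCat.{u} A} (f : M₁ ⟶ M₀) (g : M₀ ⟶ X)
    (h : IsMinApproxSeq A M f g) :
    PdLE (Module.End A M)ᵐᵒᵖ 2 (ModuleCat.of (Module.End A M)ᵐᵒᵖ (M →ₗ[A] X)) := by
  obtain ⟨⟨hM₁, ⟨hfinj, hgsurj, hrk⟩, hM₀, happrox⟩, _⟩ := h
  -- the induced sequence of Λ-modules
  refine Or.inr ⟨ModuleCat.of _ (M →ₗ[A] M₁), ModuleCat.of _ (M →ₗ[A] M₀),
    ModuleCat.ofHom (homPush A M f), ModuleCat.ofHom (homPush A M g), projective_hom A M M₀ hM₀, ⟨?_, ?_, ?_⟩,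
    Or.inl (projective_hom A M M₁ hM₁)⟩
  · -- injectivity
    intro φ ψ hφψ
    exact LinearMap.ext fun x => hfinj (LinearMap.congr_fun hφψ x)
  · -- surjectivity via the approximation property
    intro φ
    obtain ⟨q, hq⟩ := happrox M (show M ⟶ X from ModuleCat.ofHom φ) (memAdd_self A M)
    exact ⟨q.hom, congrArg ModuleCat.Hom.hom hq⟩
  · -- exactness in the middle
    apply le_antisymm
    · rintro φ ⟨ψ, rfl⟩
      show g.hom ∘ₗ (f.hom ∘ₗ ψ) = 0
      refine LinearMap.ext fun x => ?_
      have : f.hom ((show (M : Type u) →ₗ[A] M₁ from ψ) x) ∈ LinearMap.ker g.hom :=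
        hrk ▸ LinearMap.mem_range_self _ ((show (M : Type u) →ₗ[A] M₁ from ψ) x)
      simpa using this
    · intro φ hφ
      have hφ' : g.hom ∘ₗ (show (M : Type u) →ₗ[A] M₀ from φ) = 0 := hφ
      have hmem : ∀ x : M, (show (M : Type u) →ₗ[A] M₀ from φ) x ∈ LinearMap.range f.hom := by
        intro x
        rw [hrk]
        exact LinearMap.congr_fun hφ' x
      refine ⟨(LinearEquiv.ofInjective f.hom hfinj).symm.toLinearMap ∘ₗ
        (LinearMap.codRestrict (LinearMap.range f.hom)
          (show (M : Type u) →ₗ[A] M₀ from φ) hmem), ?_⟩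
      show f.hom ∘ₗ _ = (show (M : Type u) →ₗ[A] M₀ from φ)
      refine LinearMap.ext fun x => ?_
      have := (LinearEquiv.ofInjective f.hom hfinj).apply_symm_apply
        ⟨(show (M : Type u) →ₗ[A] M₀ from φ) x, hmem x⟩
      exact congrArg Subtype.val this
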